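/- Let n ≥ 2, λ ∈ (0,1), and let C̃ = C_λ D^{-1} be the column-normalized DP-λCGD strategy matrix. Then for all indices 2 ≤ i ≤ j ≤ n, one has ⟨C̃_{:,i}, C̃_{:,j}⟩ ≤ ⟨C̃_{:,i−1}, C̃_{:,j−1}⟩; equivalently d_{j−1}·d_i ≥ d_{i−1}·d_j, which holds because (1 − λ²)(λ^{2(n−j+1)} − λ^{2(n−i+1)}) ≥ 0 whenever i ≤ j. -/

import Mathlib

open Finset

/-- Euclidean norm of a vector in `ℝⁿ`. -/
noncomputable def norm2 {n : ℕ} (v : Fin n → ℝ) : ℝ := Real.sqrt (∑ i, v i ^ 2)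

/-- Frobenius norm of a square matrix. -/
noncomputable def frob {n : ℕ} (B : Matrix (Fin n) (Fin n) ℝ) : ℝ :=
  Real.sqrt (∑ i, ∑ j, B i j ^ 2)

/-- `‖B‖_{2→∞}`: the maximum Euclidean norm of a row of `B`. -/
noncomputable def rowMax {n : ℕ} (B : Matrix (Fin n) (Fin n) ℝ) : ℝ :=
  ⨆ i : Fin n, norm2 (fun j => B i j)

/-- The `n × n` prefix-sum matrix: lower triangular, all entries on or below the diagonal are 1. -/
def Amat (n : ℕ) : Matrix (Fin n) (Fin n) ℝ :=
  fun i j => if (j : ℕ) ≤ (i : ℕ) then 1 else 0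

/-- The DP-λCGD strategy matrix `C_λ`: lower triangular Toeplitz with `(C_λ)_{ij} = λ^{i-j}`. -/
noncomputable def Cmat (n : ℕ) (l : ℝ) : Matrix (Fin n) (Fin n) ℝ :=
  fun i j => if (j : ℕ) ≤ (i : ℕ) then l ^ ((i : ℕ) - (j : ℕ)) else 0

/-- The inverse `C_λ⁻¹`: ones on the diagonal, `-λ` on the first subdiagonal, zero elsewhere. -/
noncomputable def Cinvmat (n : ℕ) (l : ℝ) : Matrix (Fin n) (Fin n) ℝ :=
  fun i j => if (i : ℕ) = (j : ℕ) then 1 else if (i : ℕ) = (j : ℕ) + 1 then -l else 0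

/-- `sens_{k,b}(C)`: Euclidean norm of `∑_{j=0}^{k-1} C_{:,jb+1}` (columns 1-indexed, so the
column of 1-based index `j*b + 1` is the column of `Fin`-index `j*b`). -/
noncomputable def sens (n k b : ℕ) (C : Matrix (Fin n) (Fin n) ℝ) : ℝ :=
  norm2 (fun i => ∑ j ∈ Finset.range k, if h : j * b < n then C i ⟨j * b, h⟩ else 0)

/-- `d_j`: Euclidean norm of the `j`-th column of `C_λ`. -/
noncomputable def dcol (n : ℕ) (l : ℝ) (j : Fin n) : ℝ :=
  norm2 (fun i => Cmat n l i j)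

/-- The column-normalized DP-λCGD strategy matrix `C̃ = C_λ D⁻¹`. -/
noncomputable def Ctil (n : ℕ) (l : ℝ) : Matrix (Fin n) (Fin n) ℝ :=
  Cmat n l * (Matrix.diagonal (dcol n l))⁻¹

/-- for columns 2 ≤ i ≤ j ≤ n (1-indexed, i.e. Fin-indices with
1 ≤ i ≤ j) of C̃ = C_λ D⁻¹, ⟨C̃_{:,i}, C̃_{:,j}⟩ ≤ ⟨C̃_{:,i−1}, C̃_{:,j−1}⟩;
equivalently d_{j−1}·d_i ≥ d_{i−1}·d_j, which holds because
(1 − λ²)(λ^{2(n−j+1)} − λ^{2(n−i+1)}) ≥ 0 whenever i ≤ j. -/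
lemma dsq_eq (n : ℕ) (l : ℝ) (k : Fin n) :
    (∑ t : Fin n, Cmat n l t k ^ 2) = ∑ s ∈ Finset.range (n - (k : ℕ)), (l ^ 2) ^ s := by
  have h1 : (∑ t : Fin n, Cmat n l t k ^ 2) =
      ∑ t ∈ Finset.range n, (if (k : ℕ) ≤ t then l ^ (t - (k : ℕ)) else 0) ^ 2 := by
    rw [← Fin.sum_univ_eq_sum_range (fun t => (if (k:ℕ) ≤ t then l ^ (t - (k:ℕ)) else 0)^2) n]
    rfl
  rw [h1, Finset.range_eq_Ico,
    ← Finset.sum_Ico_consecutive _ (Nat.zero_le (k : ℕ)) (le_of_lt k.isLt)]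
  have h2 : ∑ t ∈ Finset.Ico 0 (k : ℕ), (if (k : ℕ) ≤ t then l ^ (t - (k:ℕ)) else 0) ^ 2 = 0 := by
    apply Finset.sum_eq_zero
    intro t ht
    rw [Finset.mem_Ico] at ht
    rw [if_neg (by omega)]
    simp
  rw [h2, zero_add, Finset.sum_Ico_eq_sum_range]
  apply Finset.sum_congr rfl
  intro s _
  rw [if_pos (Nat.le_add_right _ _), Nat.add_sub_cancel_left, pow_right_comm]

lemma one_le_dsq (n : ℕ) (l : ℝ) (k : Fin n) :
    (1 : ℝ) ≤ ∑ s ∈ Finset.range (n - (k : ℕ)), (l ^ 2) ^ s := by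
  have h0 : 0 ∈ Finset.range (n - (k : ℕ)) := by
    rw [Finset.mem_range]; have := k.isLt; omega
  calc (1:ℝ) = (l^2)^0 := by norm_num
  _ ≤ ∑ s ∈ Finset.range (n - (k : ℕ)), (l ^ 2) ^ s :=
      Finset.single_le_sum (fun s _ => by positivity) h0

lemma one_le_dcol (n : ℕ) (l : ℝ) (k : Fin n) : (1 : ℝ) ≤ dcol n l k := by
  unfold dcol norm2
  rw [dsq_eq]
  nlinarith [one_le_dsq n l k, Real.sq_sqrt (le_trans zero_le_one (one_le_dsq n l k)),
    Real.sqrt_nonneg (∑ s ∈ Finset.range (n - (k : ℕ)), (l ^ 2) ^ s)]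

lemma dcol_pos (n : ℕ) (l : ℝ) (k : Fin n) : 0 < dcol n l k :=
  lt_of_lt_of_le one_pos (one_le_dcol n l k)

lemma dcol_sq (n : ℕ) (l : ℝ) (k : Fin n) :
    dcol n l k ^ 2 = ∑ t : Fin n, Cmat n l t k ^ 2 := by
  unfold dcol norm2
  exact Real.sq_sqrt (Finset.sum_nonneg fun t _ => sq_nonneg _)

lemma diag_inv (n : ℕ) (l : ℝ) :
    (Matrix.diagonal (dcol n l))⁻¹ = Matrix.diagonal (fun k => (dcol n l k)⁻¹) := by
  apply Matrix.inv_eq_right_inv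
  rw [Matrix.diagonal_mul_diagonal]
  rw [show (fun k => dcol n l k * (dcol n l k)⁻¹) = fun _ => (1:ℝ) from
    funext fun k => mul_inv_cancel₀ (dcol_pos n l k).ne']
  exact Matrix.diagonal_one

lemma ctil_apply (n : ℕ) (l : ℝ) (t k : Fin n) :
    Ctil n l t k = Cmat n l t k * (dcol n l k)⁻¹ := by
  unfold Ctil
  rw [diag_inv, Matrix.mul_diagonal]

lemma inner_eq (n : ℕ) (l : ℝ) (i j : Fin n) (hij : (i : ℕ) ≤ (j : ℕ)) :
    ∑ t : Fin n, Cmat n l t i * Cmat n l t j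
      = l ^ ((j : ℕ) - (i : ℕ)) * ∑ t : Fin n, Cmat n l t j ^ 2 := by
  rw [Finset.mul_sum]
  apply Finset.sum_congr rfl
  intro t _
  unfold Cmat
  by_cases h : (j : ℕ) ≤ (t : ℕ)
  · rw [if_pos h, if_pos (le_trans hij h), sq, ← pow_add, ← pow_add, ← pow_add]
    congr 1; omega
  · rw [if_neg h]; ring

lemma key_ineq (l : ℝ) (a b : ℕ) (hab : b ≤ a) :
    (∑ s ∈ Finset.range (a + 1), (l ^ 2) ^ s) * (∑ s ∈ Finset.range b, (l ^ 2) ^ s)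
      ≤ (∑ s ∈ Finset.range (b + 1), (l ^ 2) ^ s) * (∑ s ∈ Finset.range a, (l ^ 2) ^ s) := by
  rw [geom_sum_succ, geom_sum_succ]
  have hmono : (∑ s ∈ Finset.range b, (l ^ 2) ^ s) ≤ ∑ s ∈ Finset.range a, (l ^ 2) ^ s :=
    Finset.sum_le_sum_of_subset_of_nonneg (Finset.range_subset_range.2 hab) (fun s _ _ => by positivity)
  nlinarith [sq_nonneg l]

lemma part2gen (n : ℕ) (l : ℝ) (i' j' i j : Fin n)
    (h1 : (i' : ℕ) = (i : ℕ) - 1) (h2 : (j' : ℕ) = (j : ℕ) - 1)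
    (hi : 1 ≤ (i : ℕ)) (hij : (i : ℕ) ≤ (j : ℕ)) :
    dcol n l i' * dcol n l j ≤ dcol n l j' * dcol n l i := by
  have hG : ∀ m : ℕ, (0:ℝ) ≤ ∑ s ∈ Finset.range m, (l ^ 2) ^ s :=
    fun m => Finset.sum_nonneg fun s _ => by positivity
  have hdc : ∀ k : Fin n, dcol n l k = Real.sqrt (∑ s ∈ Finset.range (n - (k : ℕ)), (l ^ 2) ^ s) :=
    fun k => by unfold dcol norm2; rw [dsq_eq]
  rw [hdc, hdc, hdc, hdc, ← Real.sqrt_mul (hG _), ← Real.sqrt_mul (hG _)]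
  apply Real.sqrt_le_sqrt
  have hjn := j.isLt
  rw [h1, h2, show n - ((i:ℕ) - 1) = (n - (i:ℕ)) + 1 from by omega,
    show n - ((j:ℕ) - 1) = (n - (j:ℕ)) + 1 from by omega]
  exact key_ineq l (n - (i:ℕ)) (n - (j:ℕ)) (by omega)

lemma part1gen (n : ℕ) (l : ℝ) (hl0 : 0 ≤ l) (i' j' i j : Fin n)
    (h1 : (i' : ℕ) = (i : ℕ) - 1) (h2 : (j' : ℕ) = (j : ℕ) - 1)
    (hi : 1 ≤ (i : ℕ)) (hij : (i : ℕ) ≤ (j : ℕ)) :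
    (∑ t, Ctil n l t i * Ctil n l t j) ≤ ∑ t, Ctil n l t i' * Ctil n l t j' := by
  have E : ∀ a b : Fin n, (a : ℕ) ≤ (b : ℕ) →
      (∑ t, Ctil n l t a * Ctil n l t b)
        = l ^ ((b : ℕ) - (a : ℕ)) * (dcol n l b / dcol n l a) := by
    intro a b hab
    simp only [ctil_apply]
    have hsum : (∑ t, Cmat n l t a * (dcol n l a)⁻¹ * (Cmat n l t b * (dcol n l b)⁻¹))
        = (∑ t, Cmat n l t a * Cmat n l t b) * ((dcol n l a)⁻¹ * (dcol n l b)⁻¹) := by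
      rw [Finset.sum_mul]; exact Finset.sum_congr rfl fun t _ => by ring
    rw [hsum, inner_eq n l a b hab, ← dcol_sq]
    have ha := (dcol_pos n l a).ne'
    have hb := (dcol_pos n l b).ne'
    field_simp
  have hij' : (i' : ℕ) ≤ (j' : ℕ) := by omega
  rw [E i j hij, E i' j' hij', show (j' : ℕ) - (i' : ℕ) = (j : ℕ) - (i : ℕ) from by omega]
  apply mul_le_mul_of_nonneg_left _ (pow_nonneg hl0 _)
  rw [div_le_div_iff₀ (dcol_pos n l i) (dcol_pos n l i')]
  have h := part2gen n l i' j' i j h1 h2 hi hij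
  calc dcol n l j * dcol n l i' = dcol n l i' * dcol n l j := mul_comm _ _
    _ ≤ dcol n l j' * dcol n l i := h

theorem stmt_15 (n : ℕ) (hn : 2 ≤ n) (l : ℝ) (hl : l ∈ Set.Ioo (0 : ℝ) 1)
    (i j : Fin n) (hi : 1 ≤ (i : ℕ)) (hij : i ≤ j) :
    (∑ t, Ctil n l t i * Ctil n l t j) ≤
      (∑ t, Ctil n l t ⟨(i : ℕ) - 1, by have := i.isLt; omega⟩ *
        Ctil n l t ⟨(j : ℕ) - 1, by have := j.isLt; omega⟩) ∧
    dcol n l ⟨(i : ℕ) - 1, by have := i.isLt; omega⟩ * dcol n l j ≤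
      dcol n l ⟨(j : ℕ) - 1, by have := j.isLt; omega⟩ * dcol n l i ∧
    0 ≤ (1 - l ^ 2) * (l ^ (2 * (n - (j : ℕ))) - l ^ (2 * (n - (i : ℕ)))) := by
  obtain ⟨hl0, hl1⟩ := hl
  have hij' : (i : ℕ) ≤ (j : ℕ) := hij
  refine ⟨part1gen n l hl0.le _ _ i j rfl rfl hi hij',
    part2gen n l _ _ i j rfl rfl hi hij', mul_nonneg (by nlinarith) ?_⟩
  have h := pow_le_pow_of_le_one hl0.le hl1.le
    (show 2 * (n - (j : ℕ)) ≤ 2 * (n - (i : ℕ)) from by omega)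
  linarith
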